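/- Let n = 2m−1 be odd and σ = 2δ even, and let Q = V + span{p_{n−j}(x) q_{j+δ}(y) − (−1)^τ p_j(x) q_{n+δ−j}(y) : 0 ≤ j ≤ m−1}, where V = span{(x−x_0)⋯(x−x_n) x^j y^k : j+k ≤ δ−1}. Then Q is a subspace of P_{n+δ}(x,y) consisting of polynomials vanishing at all nodes of S_τ, and dim Q = δ(δ+1)/2 + m = (n+δ+1)(n+δ+2)/2 − (n+1)(n+σ+1)/2. -/
import Mathlib


open Polynomial Finset

/-- The fixed univariate node polynomial `(x-x_0)⋯(x-x_n)` viewed as a bivariate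
polynomial in the first variable. -/
noncomputable def nodePoly (n : ℕ) (x : ℕ → ℝ) : MvPolynomial (Fin 2) ℝ :=
  ∏ i ∈ Finset.range (n+1), (MvPolynomial.X 0 - MvPolynomial.C (x i))

/-- The generators `(x-x_0)⋯(x-x_n) x^j y^k`, `j + k ≤ δ - 1`, of the subspace `V`. -/
noncomputable def Vgens (n δ : ℕ) (x : ℕ → ℝ) : Set (MvPolynomial (Fin 2) ℝ) :=
  {g | ∃ j k : ℕ, j + k < δ ∧
    g = nodePoly n x * MvPolynomial.X 0 ^ j * MvPolynomial.X 1 ^ k}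

/-- View a univariate real polynomial as a bivariate polynomial in variable `i`. -/
noncomputable def toMv2 (i : Fin 2) (f : Polynomial ℝ) : MvPolynomial (Fin 2) ℝ :=
  Polynomial.eval₂ MvPolynomial.C (MvPolynomial.X i) f

/-- The vanishing polynomial `p_{n-j}(x) q_{j+δ}(y) - (-1)^τ p_j(x) q_{n+δ-j}(y)`. -/
noncomputable def Fpoly (n δ τ : ℕ) (p q : ℕ → Polynomial ℝ) (j : ℕ) :
    MvPolynomial (Fin 2) ℝ :=
  toMv2 0 (p (n - j)) * toMv2 1 (q (j + δ)) -
    MvPolynomial.C ((-1 : ℝ)^τ) * (toMv2 0 (p j) * toMv2 1 (q (n + δ - j)))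

lemma toMv2_eq (i : Fin 2) (f : Polynomial ℝ) :
    toMv2 i f = Polynomial.eval₂RingHom MvPolynomial.C (MvPolynomial.X i) f := rfl

lemma eval_toMv2 (v : Fin 2 → ℝ) (i : Fin 2) (f : Polynomial ℝ) :
    MvPolynomial.eval v (toMv2 i f) = f.eval (v i) := by
  rw [toMv2, hom_eval₂]
  simp [Polynomial.eval, Polynomial.eval₂_eq_sum]

lemma totalDegree_toMv2 (i : Fin 2) (f : Polynomial ℝ) :
    (toMv2 i f).totalDegree ≤ f.natDegree := by
  rw [toMv2, Polynomial.eval₂_eq_sum, Polynomial.sum]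
  refine le_trans (MvPolynomial.totalDegree_finset_sum _ _) ?_
  refine Finset.sup_le fun e he => ?_
  refine le_trans (MvPolynomial.totalDegree_mul _ _) ?_
  simp [MvPolynomial.totalDegree_C, MvPolynomial.totalDegree_X_pow]
  exact le_natDegree_of_mem_supp e he

lemma single_pair_inj (c d e e' : ℕ) :
    (Finsupp.single (0:Fin 2) e + Finsupp.single 1 e' =
      Finsupp.single 0 c + Finsupp.single 1 d) ↔ (e = c ∧ e' = d) := by
  constructor
  · intro h
    constructor
    · have := DFunLike.congr_fun h 0
      simpa using this
    · have := DFunLike.congr_fun h 1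
      simpa using this
  · rintro ⟨rfl, rfl⟩; rfl

lemma coeff_toMv2_mul (f g : Polynomial ℝ) (c d : ℕ) :
    MvPolynomial.coeff (Finsupp.single 0 c + Finsupp.single 1 d)
      (toMv2 0 f * toMv2 1 g) = f.coeff c * g.coeff d := by
  induction f using Polynomial.induction_on' with
  | add u v hu hv =>
      simp only [toMv2, Polynomial.eval₂_add, add_mul, MvPolynomial.coeff_add,
        Polynomial.coeff_add] at *
      rw [hu, hv]
  | monomial e a =>
      induction g using Polynomial.induction_on' with
      | add u v hu hv =>
          simp only [toMv2, Polynomial.eval₂_add, mul_add, MvPolynomial.coeff_add,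
            Polynomial.coeff_add] at *
          rw [hu, hv]
      | monomial e' b =>
          rw [toMv2, toMv2, Polynomial.eval₂_monomial, Polynomial.eval₂_monomial]
          rw [MvPolynomial.C_mul_X_pow_eq_monomial, MvPolynomial.C_mul_X_pow_eq_monomial,
            MvPolynomial.monomial_mul, MvPolynomial.coeff_monomial]
          rw [Polynomial.coeff_monomial, Polynomial.coeff_monomial]
          simp only [single_pair_inj]
          by_cases h1 : e = c <;> by_cases h2 : e' = d <;> simp [h1, h2]

/-- univariate node polynomial -/
noncomputable def Nuni (n : ℕ) (x : ℕ → ℝ) : Polynomial ℝ :=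
  ∏ i ∈ Finset.range (n+1), (Polynomial.X - Polynomial.C (x i))

lemma nodePoly_eq (n : ℕ) (x : ℕ → ℝ) : nodePoly n x = toMv2 0 (Nuni n x) := by
  rw [toMv2_eq, Nuni, map_prod, nodePoly]
  simp

lemma toMv2_X_pow (i : Fin 2) (e : ℕ) :
    toMv2 i (Polynomial.X ^ e) = MvPolynomial.X i ^ e := by
  rw [toMv2_eq, map_pow]
  simp

lemma Nuni_natDegree (n : ℕ) (x : ℕ → ℝ) : (Nuni n x).natDegree = n + 1 := by
  rw [Nuni, Polynomial.natDegree_prod _ _ (fun i _ => Polynomial.X_sub_C_ne_zero (x i))]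
  simp

lemma Nuni_ne_zero (n : ℕ) (x : ℕ → ℝ) : Nuni n x ≠ 0 := by
  rw [Nuni]
  exact Finset.prod_ne_zero_iff.2 fun i _ => Polynomial.X_sub_C_ne_zero (x i)

lemma Nuni_eval_root (n : ℕ) (x : ℕ → ℝ) (r : ℕ) (hr : r ≤ n) :
    (Nuni n x).eval (x r) = 0 := by
  rw [Nuni, Polynomial.eval_prod]
  refine Finset.prod_eq_zero (i := r) (Finset.mem_range.2 (by omega)) ?_
  simp

lemma neg_one_pow_parity (r u τ : ℕ) (hτ : τ ≤ 1) (h : (r + u) % 2 = τ) :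
    (-1 : ℝ) ^ r = (-1) ^ τ * (-1) ^ u := by
  rw [← pow_add]
  rcases Nat.even_or_odd r with hr | hr
  · have : Even (τ + u) := by
      rw [Nat.even_iff] at *; omega
    rw [hr.neg_one_pow, this.neg_one_pow]
  · have : Odd (τ + u) := by
      rw [Nat.odd_iff] at *; omega
    rw [hr.neg_one_pow, this.neg_one_pow]

lemma sum_desc (δ : ℕ) : (∑ i ∈ Finset.range δ, (δ - i)) = δ * (δ + 1) / 2 := by
  have h : 2 * (∑ i ∈ Finset.range δ, (δ - i)) = δ * (δ + 1) := by
    induction δ with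
    | zero => simp
    | succ k ih =>
        rw [Finset.sum_range_succ]
        have e : ∀ i ∈ Finset.range k, k + 1 - i = (k - i) + 1 := by
          intro i hi; rw [Finset.mem_range] at hi; omega
        rw [Finset.sum_congr rfl e, Finset.sum_add_distrib, Finset.sum_const,
          Finset.card_range, smul_eq_mul, mul_one]
        have hq : (k+1)*(k+1+1) = k*(k+1) + 2*(k+1) := by ring
        generalize k*(k+1) = A at ih hq
        generalize (k+1)*(k+1+1) = B at hq ⊢
        omega
  generalize δ*(δ+1) = A at h ⊢
  omega

lemma arith_helper (m' δ : ℕ) :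
    δ * (δ + 1) / 2 + (m' + 1) =
      (2 * m' + 2 + δ) * (2 * m' + 3 + δ) / 2 - (2 * m' + 2) * (2 * m' + 2 + 2 * δ) / 2 := by
  have h1 : (2*m'+2+δ)*(2*m'+3+δ) = 2*((m'+1)*(2*m'+2+2*δ)) + δ*(δ+1) + 2*(m'+1) := by ring
  have h2 : (2*m'+2)*(2*m'+2+2*δ) = 2*((m'+1)*(2*m'+2+2*δ)) := by ring
  have h3 : δ*(δ+1) % 2 = 0 := by
    have h := Nat.even_mul_succ_self δ
    rcases h with ⟨t, ht⟩
    omega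
  generalize hA : δ*(δ+1) = A at h1 h3 ⊢
  generalize (2*m'+2+δ)*(2*m'+3+δ) = R at h1 ⊢
  generalize (2*m'+2)*(2*m'+2+2*δ) = S at h2 ⊢
  generalize (m'+1)*(2*m'+2+2*δ) = Q at h1 h2
  omega

lemma Vgen_form (n : ℕ) (x : ℕ → ℝ) (j k : ℕ) :
    nodePoly n x * MvPolynomial.X 0 ^ j * MvPolynomial.X 1 ^ k =
      toMv2 0 (Nuni n x * Polynomial.X ^ j) * toMv2 1 (Polynomial.X ^ k) := by
  rw [nodePoly_eq, toMv2_eq, toMv2_eq, toMv2_eq, map_mul, map_pow, map_pow]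
  simp [toMv2_eq]

theorem Q_subspace_odd (n m σ δ τ : ℕ) (hm : 1 ≤ m) (hn : n = 2*m - 1)
    (hσ : σ = 2*δ) (hτ : τ ≤ 1)
    (x y : ℕ → ℝ)
    (hx : ∀ j, j < n → x (j+1) < x j)
    (hy : ∀ j, j < n + σ → y (j+1) < y j)
    (a b c d : ℕ → ℝ) (p q : ℕ → Polynomial ℝ)
    (hp0 : p 0 = 1) (hp1 : p 1 = C (a 0) * X + C (b 0))
    (hprec : ∀ k, 1 ≤ k → k ≤ n - 1 →
      p (k+1) + p (k-1) = (C (a k) * X + C (b k)) * p k)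
    (hq0 : q 0 = 1) (hq1 : q 1 = C (c 0) * X + C (d 0))
    (hqrec : ∀ k, 1 ≤ k → k ≤ n + σ - 1 →
      q (k+1) + q (k-1) = (C (c k) * X + C (d k)) * q k)
    (hapos : ∀ k, k ≤ n - 1 → 0 < a k)
    (hcpos : ∀ k, k ≤ n + σ - 1 → 0 < c k)
    (harefl : ∀ k, 1 ≤ k → k ≤ n - 1 → a k = a (n - k) ∧ b k = b (n - k))
    (hcrefl : ∀ k, 1 ≤ k → k ≤ n + σ - 1 →
      c k = c (n + σ - k) ∧ d k = d (n + σ - k))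
    (hpdeg : ∀ j, j ≤ n → (p j).natDegree = j)
    (hqdeg : ∀ k, k ≤ n + σ → (q k).natDegree = k)
    (hxalt : ∀ j r, j ≤ n → r ≤ n →
      (p (n - j)).eval (x r) = (-1)^r * (p j).eval (x r))
    (hyalt : ∀ k u, k ≤ n + σ → u ≤ n + σ →
      (q (n + σ - k)).eval (y u) = (-1)^u * (q k).eval (y u)) :
    (∀ P ∈ Submodule.span ℝ
        (Vgens n δ x ∪ {g | ∃ j < m, g = Fpoly n δ τ p q j}),
      MvPolynomial.totalDegree P ≤ n + δ) ∧
    (∀ P ∈ Submodule.span ℝ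
        (Vgens n δ x ∪ {g | ∃ j < m, g = Fpoly n δ τ p q j}),
      ∀ r u, r ≤ n → u ≤ n + σ → (r + u) % 2 = τ →
        MvPolynomial.eval ![x r, y u] P = 0) ∧
    Module.finrank ℝ (Submodule.span ℝ
        (Vgens n δ x ∪ {g | ∃ j < m, g = Fpoly n δ τ p q j}))
      = δ * (δ + 1) / 2 + m ∧
    δ * (δ + 1) / 2 + m
      = (n + δ + 1) * (n + δ + 2) / 2 - (n + 1) * (n + σ + 1) / 2 := by
  have hmn : m ≤ n := by omega
  -- degree bound on generators
  have gdeg : ∀ g ∈ (Vgens n δ x ∪ {g | ∃ j < m, g = Fpoly n δ τ p q j}),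
      MvPolynomial.totalDegree g ≤ n + δ := by
    rintro g (⟨j, k, hjk, rfl⟩ | ⟨j, hj, rfl⟩)
    · rw [Vgen_form]
      refine le_trans (MvPolynomial.totalDegree_mul _ _) ?_
      have h1 := totalDegree_toMv2 0 (Nuni n x * Polynomial.X ^ j)
      have h2 := totalDegree_toMv2 1 (Polynomial.X ^ k : Polynomial ℝ)
      have h3 : (Nuni n x * Polynomial.X ^ j).natDegree ≤ (n+1) + j := by
        refine le_trans Polynomial.natDegree_mul_le ?_
        rw [Nuni_natDegree, Polynomial.natDegree_X_pow]
      rw [Polynomial.natDegree_X_pow] at h2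
      omega
    · rw [Fpoly, sub_eq_add_neg]
      refine le_trans (MvPolynomial.totalDegree_add _ _) (max_le ?_ ?_)
      · refine le_trans (MvPolynomial.totalDegree_mul _ _) ?_
        have h1 := totalDegree_toMv2 0 (p (n - j))
        have h2 := totalDegree_toMv2 1 (q (j + δ))
        rw [hpdeg _ (by omega)] at h1
        rw [hqdeg _ (by omega)] at h2
        omega
      · rw [MvPolynomial.totalDegree_neg]
        refine le_trans (MvPolynomial.totalDegree_mul _ _) ?_
        refine le_trans (add_le_add (MvPolynomial.totalDegree_C _).le
          (MvPolynomial.totalDegree_mul _ _)) ?_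
        have h1 := totalDegree_toMv2 0 (p j)
        have h2 := totalDegree_toMv2 1 (q (n + δ - j))
        rw [hpdeg _ (by omega)] at h1
        rw [hqdeg _ (by omega)] at h2
        omega
  refine ⟨?_, ?_, ?_, ?_⟩
  · -- total degree of span
    intro P hP
    have : Submodule.span ℝ (Vgens n δ x ∪ {g | ∃ j < m, g = Fpoly n δ τ p q j})
        ≤ MvPolynomial.restrictTotalDegree (Fin 2) ℝ (n + δ) := by
      rw [Submodule.span_le]
      intro g hg
      exact (MvPolynomial.mem_restrictTotalDegree _ _ g).2 (gdeg g hg)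
    exact (MvPolynomial.mem_restrictTotalDegree _ _ P).1 (this hP)
  · -- vanishing
    intro P hP r u hr hu hpar
    induction hP using Submodule.span_induction with
    | zero => simp
    | add f g _ _ hf hg => rw [map_add, hf, hg, add_zero]
    | smul s f _ hf => rw [MvPolynomial.smul_eval, hf, mul_zero]
    | mem g hg =>
        rcases hg with ⟨j, k, hjk, rfl⟩ | ⟨j, hj, rfl⟩
        · rw [Vgen_form, map_mul, eval_toMv2, eval_toMv2]
          have : (Nuni n x * Polynomial.X ^ j).eval ((![x r, y u] : Fin 2 → ℝ) 0) = 0 := by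
            rw [Polynomial.eval_mul]
            have : (![x r, y u] : Fin 2 → ℝ) 0 = x r := by simp
            rw [this, Nuni_eval_root n x r hr, zero_mul]
          rw [this, zero_mul]
        · rw [Fpoly, map_sub, map_mul, map_mul, map_mul, eval_toMv2, eval_toMv2,
            eval_toMv2, eval_toMv2, MvPolynomial.eval_C]
          have h0 : (![x r, y u] : Fin 2 → ℝ) 0 = x r := by simp
          have h1 : (![x r, y u] : Fin 2 → ℝ) 1 = y u := by simp
          rw [h0, h1]
          have e1 : (p (n - j)).eval (x r) = (-1)^r * (p j).eval (x r) :=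
            hxalt j r (by omega) hr
          have e2 : (q (n + δ - j)).eval (y u) = (-1)^u * (q (j + δ)).eval (y u) := by
            have : n + δ - j = n + σ - (j + δ) := by omega
            rw [this]
            exact hyalt (j + δ) u (by omega) hu
          rw [e1, e2, neg_one_pow_parity r u τ hτ hpar]
          ring
  · -- dimension
    set v : ((Σ a : Fin δ, Fin (δ - (a:ℕ))) ⊕ Fin m) → MvPolynomial (Fin 2) ℝ :=
      Sum.elim
        (fun ab => nodePoly n x * MvPolynomial.X 0 ^ (ab.1 : ℕ) * MvPolynomial.X 1 ^ (ab.2 : ℕ))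
        (fun j => Fpoly n δ τ p q (j : ℕ)) with hv
    have hrange : Set.range v =
        Vgens n δ x ∪ {g | ∃ j < m, g = Fpoly n δ τ p q j} := by
      ext P
      constructor
      · rintro ⟨i, rfl⟩
        rcases i with ab | j
        · exact Or.inl ⟨ab.1, ab.2, by have := ab.2.2; have := ab.1.2; omega, rfl⟩
        · exact Or.inr ⟨j, j.2, rfl⟩
      · rintro (⟨j, k, hjk, rfl⟩ | ⟨j, hj, rfl⟩)
        · exact ⟨Sum.inl ⟨⟨j, by omega⟩, ⟨k, (by omega : k < δ - j)⟩⟩, rfl⟩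
        · exact ⟨Sum.inr ⟨j, hj⟩, rfl⟩
    -- linear independence
    have hli : LinearIndependent ℝ v := by
      rw [Fintype.linearIndependent_iff]
      intro g hsum
      -- coefficient of v at a product monomial
      have cV : ∀ (a₁ b₁ c₁ d₁ : ℕ),
          MvPolynomial.coeff (Finsupp.single 0 c₁ + Finsupp.single 1 d₁)
            (nodePoly n x * MvPolynomial.X 0 ^ a₁ * MvPolynomial.X 1 ^ b₁) =
          (Nuni n x * Polynomial.X ^ a₁).coeff c₁ *
            ((Polynomial.X : Polynomial ℝ) ^ b₁).coeff d₁ := by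
        intro a₁ b₁ c₁ d₁
        rw [Vgen_form, coeff_toMv2_mul]
      have cF : ∀ (j' c₁ d₁ : ℕ),
          MvPolynomial.coeff (Finsupp.single 0 c₁ + Finsupp.single 1 d₁)
            (Fpoly n δ τ p q j') =
          (p (n - j')).coeff c₁ * (q (j' + δ)).coeff d₁ -
            (-1:ℝ)^τ * ((p j').coeff c₁ * (q (n + δ - j')).coeff d₁) := by
        intro j' c₁ d₁
        rw [Fpoly, MvPolynomial.coeff_sub, MvPolynomial.coeff_C_mul,
          coeff_toMv2_mul, coeff_toMv2_mul]
      -- Step A : Fpoly coefficients vanish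
      have hA : ∀ j : Fin m, g (Sum.inr j) = 0 := by
        intro j
        have hjm := j.2
        have hco := congrArg (MvPolynomial.coeff
          (Finsupp.single 0 (n - (j:ℕ)) + Finsupp.single 1 ((j:ℕ) + δ))) hsum
        rw [MvPolynomial.coeff_sum, MvPolynomial.coeff_zero] at hco
        simp only [MvPolynomial.coeff_smul, smul_eq_mul] at hco
        rw [Fintype.sum_sum_type] at hco
        have hz1 : ∑ ab : (Σ a : Fin δ, Fin (δ - (a:ℕ))),
            g (Sum.inl ab) * MvPolynomial.coeff
              (Finsupp.single 0 (n - (j:ℕ)) + Finsupp.single 1 ((j:ℕ) + δ))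
              (v (Sum.inl ab)) = 0 := by
          refine Finset.sum_eq_zero fun ab _ => ?_
          rw [hv]
          simp only [Sum.elim_inl]
          rw [cV, Polynomial.coeff_X_pow]
          have hb := ab.2.2
          have : ¬((j:ℕ) + δ = (ab.2 : ℕ)) := by omega
          rw [if_neg this, mul_zero, mul_zero]
        rw [hz1, zero_add] at hco
        have hz2 : ∑ j' : Fin m, g (Sum.inr j') * MvPolynomial.coeff
            (Finsupp.single 0 (n - (j:ℕ)) + Finsupp.single 1 ((j:ℕ) + δ))
            (v (Sum.inr j')) =
            g (Sum.inr j) * ((p (n - (j:ℕ))).coeff (n - (j:ℕ)) *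
              (q ((j:ℕ) + δ)).coeff ((j:ℕ) + δ)) := by
          rw [Finset.sum_eq_single j]
          · rw [hv]; simp only [Sum.elim_inr]
            rw [cF]
            have hp2 : (p (j:ℕ)).coeff (n - (j:ℕ)) = 0 := by
              refine Polynomial.coeff_eq_zero_of_natDegree_lt ?_
              rw [hpdeg _ (by omega)]; omega
            rw [hp2]
            ring
          · intro j' _ hne
            rw [hv]; simp only [Sum.elim_inr]
            rw [cF]
            have hj'm := j'.2
            have hne' : (j':ℕ) ≠ (j:ℕ) := fun h => hne (Fin.ext h)
            have hp2 : (p (j':ℕ)).coeff (n - (j:ℕ)) = 0 := by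
              refine Polynomial.coeff_eq_zero_of_natDegree_lt ?_
              rw [hpdeg _ (by omega)]; omega
            rw [hp2]
            rcases Nat.lt_or_ge (j':ℕ) (j:ℕ) with hlt | hge
            · have hq2 : (q ((j':ℕ) + δ)).coeff ((j:ℕ) + δ) = 0 := by
                refine Polynomial.coeff_eq_zero_of_natDegree_lt ?_
                rw [hqdeg _ (by omega)]; omega
              rw [hq2]; ring
            · have hp3 : (p (n - (j':ℕ))).coeff (n - (j:ℕ)) = 0 := by
                refine Polynomial.coeff_eq_zero_of_natDegree_lt ?_
                rw [hpdeg _ (by omega)]; omega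
              rw [hp3]; ring
          · intro h; exact absurd (Finset.mem_univ j) h
        rw [hz2] at hco
        have hLp : (p (n - (j:ℕ))).coeff (n - (j:ℕ)) ≠ 0 := by
          have hd := hpdeg (n - (j:ℕ)) (by omega)
          set f := p (n - (j:ℕ)) with hf
          rw [← hd, Polynomial.coeff_natDegree, Ne, Polynomial.leadingCoeff_eq_zero]
          intro h0
          rw [h0] at hd
          simp at hd
          omega
        have hLq : (q ((j:ℕ) + δ)).coeff ((j:ℕ) + δ) ≠ 0 := by
          by_cases hjd : (j:ℕ) + δ = 0
          · rw [hjd, hq0]; simp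
          · have hd := hqdeg ((j:ℕ) + δ) (by omega)
            set f := q ((j:ℕ) + δ) with hf
            rw [← hd, Polynomial.coeff_natDegree, Ne, Polynomial.leadingCoeff_eq_zero]
            intro h0
            rw [h0] at hd
            simp at hd
            omega
        rcases mul_eq_zero.1 hco with h | h
        · exact h
        · exact absurd h (mul_ne_zero hLp hLq)
      -- Step B : V coefficients vanish
      intro i
      rcases i with ab | j
      swap
      · exact hA j
      rcases ab with ⟨a0, b0⟩
      rw [Fintype.sum_sum_type] at hsum
      have hz2 : ∑ j : Fin m, g (Sum.inr j) • v (Sum.inr j) = 0 := by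
        refine Finset.sum_eq_zero fun j _ => by rw [hA j, zero_smul]
      rw [hz2, add_zero] at hsum
      have hfac : nodePoly n x * (∑ ab : (Σ a : Fin δ, Fin (δ - (a:ℕ))),
          g (Sum.inl ab) • (MvPolynomial.X 0 ^ (ab.1:ℕ) * MvPolynomial.X 1 ^ (ab.2:ℕ))) = 0 := by
        rw [Finset.mul_sum, ← hsum]
        refine Finset.sum_congr rfl fun ab _ => ?_
        rw [hv]; simp only [Sum.elim_inl]
        rw [mul_smul_comm, mul_assoc]
      have hnz : nodePoly n x ≠ 0 := by
        intro h0
        have hmono : ∀ i, i ≤ n → x i ≤ x 0 := by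
          intro i
          induction i with
          | zero => intro _; exact le_refl _
          | succ i ih =>
              intro hi
              have h1 := hx i (by omega)
              have h2 := ih (by omega)
              linarith
        have hev := congrArg (MvPolynomial.eval ![x 0 + 1, 0]) h0
        rw [nodePoly, map_prod, map_zero] at hev
        have hpos : (0:ℝ) < ∏ i ∈ Finset.range (n+1),
            MvPolynomial.eval ![x 0 + 1, 0] (MvPolynomial.X 0 - MvPolynomial.C (x i)) := by
          refine Finset.prod_pos fun i hi => ?_
          rw [Finset.mem_range] at hi
          have := hmono i (by omega)
          simp only [map_sub, MvPolynomial.eval_X, MvPolynomial.eval_C]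
          have : (![x 0 + 1, 0] : Fin 2 → ℝ) 0 = x 0 + 1 := by simp
          rw [this]
          linarith [hmono i (by omega)]
        rw [hev] at hpos
        exact lt_irrefl _ hpos
      have hS : (∑ ab : (Σ a : Fin δ, Fin (δ - (a:ℕ))),
          g (Sum.inl ab) • (MvPolynomial.X 0 ^ (ab.1:ℕ) * MvPolynomial.X 1 ^ (ab.2:ℕ) :
            MvPolynomial (Fin 2) ℝ)) = 0 := by
        rcases mul_eq_zero.1 hfac with h | h
        · exact absurd h hnz
        · exact h
      have hco := congrArg (MvPolynomial.coeff
        (Finsupp.single 0 (a0:ℕ) + Finsupp.single 1 (b0:ℕ))) hS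
      rw [MvPolynomial.coeff_sum, MvPolynomial.coeff_zero] at hco
      simp only [MvPolynomial.coeff_smul, smul_eq_mul] at hco
      have hcx : ∀ (a₁ b₁ : ℕ), MvPolynomial.coeff
          (Finsupp.single 0 (a0:ℕ) + Finsupp.single 1 (b0:ℕ))
          (MvPolynomial.X (0:Fin 2) ^ a₁ * MvPolynomial.X 1 ^ b₁) =
          (if (a0:ℕ) = a₁ then (1:ℝ) else 0) * (if (b0:ℕ) = b₁ then 1 else 0) := by
        intro a₁ b₁
        rw [← toMv2_X_pow 0 a₁, ← toMv2_X_pow 1 b₁, coeff_toMv2_mul,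
          Polynomial.coeff_X_pow, Polynomial.coeff_X_pow]
      rw [Finset.sum_eq_single (⟨a0, b0⟩ : Σ a : Fin δ, Fin (δ - (a:ℕ)))] at hco
      · rw [hcx] at hco
        simpa using hco
      · rintro ⟨a1, b1⟩ _ hne
        rw [hcx]
        by_cases h1 : (a0:ℕ) = (a1:ℕ)
        · by_cases h2 : (b0:ℕ) = (b1:ℕ)
          · exfalso
            apply hne
            have ha : a1 = a0 := Fin.ext h1.symm
            subst ha
            have hb : b1 = b0 := Fin.ext h2.symm
            subst hb
            rfl
          · rw [if_neg h2, mul_zero, mul_zero]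
        · rw [if_neg h1, zero_mul, mul_zero]
      · intro h; exact absurd (Finset.mem_univ _) h
    rw [← hrange, finrank_span_eq_card hli]
    rw [Fintype.card_sum, Fintype.card_sigma]
    simp only [Fintype.card_fin]
    rw [Fin.sum_univ_eq_sum_range (fun i => δ - i) δ, sum_desc]
  · -- arithmetic
    obtain ⟨m', rfl⟩ : ∃ m', m = m' + 1 := ⟨m - 1, by omega⟩
    subst hn hσ
    have e1 : 2*(m'+1) - 1 + δ + 1 = 2*m' + 2 + δ := by omega
    have e2 : 2*(m'+1) - 1 + δ + 2 = 2*m' + 3 + δ := by omega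
    have e3 : 2*(m'+1) - 1 + 1 = 2*m' + 2 := by omega
    have e4 : 2*(m'+1) - 1 + 2*δ + 1 = 2*m' + 2 + 2*δ := by omega
    rw [e1, e2, e3, e4]
    exact arith_helper m' δ
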